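/- For any u > 0, v ∈ ℝ and real x > 1, (1/(2πi)) ∫_{Re(s)=σ} e^{us² - vs} x^{-s} ds = (1/√(4πu)) e^{-(v + log x)²/(4u)} for every σ > 0, the vertical integral being independent of σ. -/

import Mathlib

open MeasureTheory Complex

theorem stmt_19 (u v x : ℝ) (hu : 0 < u) (hx : 1 < x) (σ : ℝ) (hσ : 0 < σ) :
    (1 / (2 * Real.pi * Complex.I))
        * ∫ t : ℝ, Complex.exp (u * (σ + t * Complex.I) ^ 2 - v * (σ + t * Complex.I))
            * (x : ℂ) ^ (-(σ + t * Complex.I)) * Complex.I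
      = (1 / Real.sqrt (4 * Real.pi * u) : ℝ)
          * Complex.exp (-((v + Real.log x) ^ 2) / (4 * u)) := by
  have hx0 : (0:ℝ) < x := lt_trans one_pos hx
  set L : ℝ := v + Real.log x with hL
  have key : ∀ t : ℝ,
      Complex.exp (u * (σ + t * Complex.I) ^ 2 - v * (σ + t * Complex.I))
            * (x : ℂ) ^ (-(σ + t * Complex.I)) * Complex.I
      = Complex.exp ((-u : ℂ) * t ^ 2 + ((2*u*σ - L) * Complex.I) * t
          + (u * σ^2 - L * σ)) * Complex.I := by
    intro t
    rw [Complex.cpow_def_of_ne_zero (by exact_mod_cast hx0.ne'),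
      ← Complex.ofReal_log hx0.le, ← Complex.exp_add]
    congr 2
    rw [hL]
    push_cast
    ring_nf
    rw [Complex.I_sq]
    ring
  rw [show (∫ t : ℝ, Complex.exp (u * (σ + t * Complex.I) ^ 2 - v * (σ + t * Complex.I))
            * (x : ℂ) ^ (-(σ + t * Complex.I)) * Complex.I)
      = ∫ t : ℝ, Complex.exp ((-u : ℂ) * t ^ 2 + ((2*u*σ - L) * Complex.I) * t
          + (u * σ^2 - L * σ)) * Complex.I from by simp_rw [key]]
  rw [integral_mul_const,
    integral_cexp_quadratic (by simpa using hu) ((2*u*σ - L) * Complex.I) (u * σ^2 - L * σ)]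
  have harg : (↑u * ↑σ ^ 2 - ↑L * ↑σ - ((2*u*σ - L) * Complex.I) ^ 2 / (4 * (-u : ℂ)))
      = (-(L^2) / (4*u) : ℝ) := by
    have : (u:ℂ) ≠ 0 := by exact_mod_cast hu.ne'
    push_cast
    field_simp
    ring_nf
    rw [Complex.I_sq]
    ring
  rw [harg]
  have hsq : ((Real.pi / -(-u : ℂ)) ^ (1/2 : ℂ)) = (Real.sqrt (Real.pi / u) : ℂ) := by
    rw [neg_neg, show ((Real.pi : ℂ) / u) = ((Real.pi / u : ℝ) : ℂ) by push_cast; ring,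
      show (1/2 : ℂ) = ((1/2 : ℝ) : ℂ) by norm_num,
      ← Complex.ofReal_cpow (by positivity), ← Real.sqrt_eq_rpow]
  rw [hsq]
  rw [show ((1 : ℂ) / (2 * Real.pi * Complex.I)) * ((Real.sqrt (Real.pi / u) : ℂ)
      * Complex.exp ((-(L^2) / (4*u) : ℝ)) * Complex.I)
    = ((Real.sqrt (Real.pi / u) / (2 * Real.pi) : ℝ) : ℂ)
      * Complex.exp ((-(L^2) / (4*u) : ℝ)) from by
    push_cast
    have : (Complex.I : ℂ) ≠ 0 := Complex.I_ne_zero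
    have hπ : (Real.pi : ℂ) ≠ 0 := by exact_mod_cast Real.pi_ne_zero
    have hsu : ((Real.sqrt u : ℝ) : ℂ) ≠ 0 := by
      exact_mod_cast Real.sqrt_ne_zero'.mpr hu
    field_simp]
  have hpref : Real.sqrt (Real.pi / u) / (2 * Real.pi) = 1 / Real.sqrt (4 * Real.pi * u) := by
    rw [div_eq_div_iff (by positivity) (by positivity), one_mul,
      ← Real.sqrt_mul (by positivity)]
    rw [show Real.pi / u * (4 * Real.pi * u) = (2*Real.pi)^2 by field_simp; ring]
    exact Real.sqrt_sq (by positivity)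
  rw [hpref]
  congr 1
  rw [hL]
  push_cast
  ring
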